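/- If g : ℝ → ℝ is additive, periodic with period 1, and x ↦ exp(i·α·g(x)) has zero integral over [0,1] for every positive rational α, then a contradiction arises: in fact there exists a positive rational α with ∫₀¹ exp(i·α·g(x)) dx ≠ 0, provided exp(i·g) is measurable. -/

import Mathlib

open MeasureTheory

theorem stmt_16 (g : ℝ → ℝ) (hg : ∀ x y, g (x + y) = g x + g y)
    (hper : ∀ x, g (x + 1) = g x)
    (hmeas : AEMeasurable (fun x => Complex.exp (Complex.I * (g x : ℂ)))
      (volume.restrict (Set.Icc (0 : ℝ) 1))) :
    ∃ α : ℚ, 0 < α ∧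
      ∫ x in Set.Icc (0 : ℝ) 1, Complex.exp (Complex.I * ((α : ℝ) * g x : ℝ)) ≠ 0 := by
  by_contra hcon
  push_neg at hcon
  -- g is ℚ-linear
  have hlin : ∀ (q : ℚ) (x : ℝ), g ((q : ℝ) * x) = (q : ℝ) * g x := by
    intro q x
    have := (AddMonoidHom.mk' g (hg · ·)).toRatLinearMap.map_smul q x
    simpa [Rat.smul_def] using this
  set F : ℝ → ℂ := fun x => Complex.exp (Complex.I * (g x : ℂ)) with hF
  have hFnorm : ∀ x, ‖F x‖ = 1 := by
    intro x
    rw [hF]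
    simp only [Complex.norm_exp]
    simp
  -- F is integrable on [0,1]
  have hFint : IntegrableOn F (Set.Icc (0 : ℝ) 1) := by
    refine Integrable.mono' (integrable_const 1) hmeas.aestronglyMeasurable
      (Filter.Eventually.of_forall fun x => ?_)
    simp [hFnorm x]
  set f : ℝ → ℂ := (Set.Icc (0 : ℝ) 1).indicator F with hf
  have hfint : Integrable f := by
    rw [hf, integrable_indicator_iff measurableSet_Icc]
    exact hFint
  have hfII : ∀ a b : ℝ, IntervalIntegrable f volume a b := fun a b =>
    hfint.intervalIntegrable
  -- the key vanishing of primitives at rationals in (0,1]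
  have key : ∀ q : ℚ, 0 < q → q ≤ 1 → (∫ u in (0:ℝ)..(q:ℝ), f u) = 0 := by
    intro q hq hq1
    have hq0 : (0:ℝ) < (q:ℝ) := by exact_mod_cast hq
    have hq1' : (q:ℝ) ≤ 1 := by exact_mod_cast hq1
    have h0 := hcon q hq
    have h1 : (∫ x in (0:ℝ)..1, f ((q:ℝ) * x)) = 0 := by
      rw [intervalIntegral.integral_of_le (by norm_num : (0:ℝ) ≤ 1)]
      rw [← MeasureTheory.integral_Icc_eq_integral_Ioc]
      rw [← h0]
      refine setIntegral_congr_fun measurableSet_Icc fun x hx => ?_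
      have hmem : (q:ℝ) * x ∈ Set.Icc (0:ℝ) 1 := by
        constructor
        · exact mul_nonneg hq0.le hx.1
        · calc (q:ℝ) * x ≤ 1 * 1 := by
                exact mul_le_mul hq1' hx.2 hx.1 zero_le_one
            _ = 1 := by ring
      rw [hf, Set.indicator_of_mem hmem]
      show Complex.exp (Complex.I * (g ((q:ℝ) * x) : ℂ)) = _
      rw [hlin q x]
    rw [intervalIntegral.integral_comp_mul_left f hq0.ne'] at h1
    simp only [mul_zero, mul_one] at h1
    have := smul_eq_zero.mp h1
    rcases this with h | h
    · exact absurd h (by positivity)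
    · exact h
  -- the primitive of f
  set Φ : ℝ → ℂ := fun t => ∫ u in (0:ℝ)..t, f u with hΦ
  have hΦcont : Continuous Φ := intervalIntegral.continuous_primitive hfII 0
  -- Φ vanishes on [0,1]
  have hΦ01 : ∀ t ∈ Set.Icc (0:ℝ) 1, Φ t = 0 := by
    have hclosed : IsClosed {t : ℝ | Φ t = 0} :=
      isClosed_eq hΦcont continuous_const
    have hsub : Set.Ioo (0:ℝ) 1 ⊆ {t | Φ t = 0} := by
      have hdense : Dense (Set.range ((↑) : ℚ → ℝ)) := Rat.denseRange_cast
      intro t ht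
      have : t ∈ closure (Set.Ioo 0 1 ∩ Set.range ((↑) : ℚ → ℝ)) :=
        hdense.open_subset_closure_inter isOpen_Ioo ht
      refine hclosed.closure_subset (closure_mono ?_ this)
      rintro x ⟨⟨hx1, hx2⟩, q, rfl⟩
      have hq : 0 < q := by exact_mod_cast hx1
      have hq1 : q ≤ 1 := by exact_mod_cast hx2.le
      exact key q hq hq1
    intro t ht
    have : t ∈ closure (Set.Ioo (0:ℝ) 1) := by
      rw [closure_Ioo (by norm_num : (0:ℝ) ≠ 1)]; exact ht
    exact hclosed.closure_subset (closure_mono hsub this)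
  -- Φ vanishes everywhere
  have hΦall : ∀ t : ℝ, Φ t = 0 := by
    intro t
    rcases lt_trichotomy t 0 with ht | ht | ht
    · have this0 : (∫ u in t..(0:ℝ), f u) = 0 := by
        rw [intervalIntegral.integral_of_le ht.le]
        have hae : ∀ᵐ u ∂(volume.restrict (Set.Ioc t 0)), f u = 0 := by
          rw [ae_restrict_iff' measurableSet_Ioc]
          have h0 : ∀ᵐ u : ℝ ∂volume, u ≠ 0 := by
            have : (volume ({0} : Set ℝ)) = 0 := measure_singleton 0
            exact (ae_iff.mpr (by simpa using this))
          filter_upwards [h0] with u hu humem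
          have : u ∉ Set.Icc (0:ℝ) 1 := fun hc => hu (le_antisymm humem.2 hc.1)
          exact Set.indicator_of_notMem this F
        rw [integral_congr_ae hae, integral_zero]
      have : Φ t = -∫ u in t..(0:ℝ), f u := intervalIntegral.integral_symm t 0
      rw [this, this0, neg_zero]
    · simp [hΦ, ht]
    · rcases le_or_gt t 1 with ht1 | ht1
      · exact hΦ01 t ⟨ht.le, ht1⟩
      · have h01 : Φ 1 = 0 := hΦ01 1 ⟨zero_le_one, le_refl 1⟩
        have h1t : (∫ u in (1:ℝ)..t, f u) = 0 := by
          rw [intervalIntegral.integral_of_le ht1.le]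
          have : ∀ u ∈ Set.Ioc (1:ℝ) t, f u = 0 := by
            intro u hu
            have : u ∉ Set.Icc (0:ℝ) 1 := fun hc => absurd hu.1 (not_lt.mpr hc.2)
            exact Set.indicator_of_notMem this F
          rw [setIntegral_congr_fun measurableSet_Ioc this, integral_zero]
        have := intervalIntegral.integral_add_adjacent_intervals
          (hfII 0 1) (hfII 1 t)
        simp only [hΦ]
        rw [← this]
        change Φ 1 + _ = 0
        rw [h01, h1t, add_zero]
  -- Lebesgue differentiation: f = 0 a.e.
  have hzero : ∀ᵐ x : ℝ ∂volume, f x = 0 := by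
    have hloc : LocallyIntegrable f volume := hfint.locallyIntegrable
    filter_upwards [IsUnifLocDoublingMeasure.ae_tendsto_average
      (μ := volume) hloc 1] with x hx
    have hten := hx (fun j : ℝ => x) (fun j : ℝ => j) Filter.tendsto_id
      (by
        filter_upwards [self_mem_nhdsWithin] with j hj
        exact Metric.mem_closedBall_self (by simpa using le_of_lt hj))
    have hzero' : ∀ᶠ j in nhdsWithin 0 (Set.Ioi (0:ℝ)),
        (⨍ y in Metric.closedBall x j, f y) = 0 := by
      filter_upwards [self_mem_nhdsWithin] with j hj
      have hj' : (0:ℝ) < j := hj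
      have hball : Metric.closedBall x j = Set.Icc (x - j) (x + j) :=
        Real.closedBall_eq_Icc
      have hint : (∫ y in Metric.closedBall x j, f y) = 0 := by
        rw [hball, MeasureTheory.integral_Icc_eq_integral_Ioc,
          ← intervalIntegral.integral_of_le (by linarith : x - j ≤ x + j)]
        have := intervalIntegral.integral_interval_sub_left
          (hfII 0 (x + j)) (hfII 0 (x - j))
        rw [← this]
        change Φ (x + j) - Φ (x - j) = 0
        rw [hΦall, hΦall, sub_zero]
      rw [setAverage_eq, hint, smul_zero]
    have : Filter.Tendsto (fun _ : ℝ => (0:ℂ)) (nhdsWithin 0 (Set.Ioi (0:ℝ)))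
        (nhds (f x)) := Filter.Tendsto.congr'
      (by filter_upwards [hzero'] with j hj using hj) hten
    exact (tendsto_nhds_unique tendsto_const_nhds this).symm
  -- contradiction
  have hsubset : Set.Icc (0:ℝ) 1 ⊆ {x : ℝ | ¬ f x = 0} := by
    intro x hx
    simp only [Set.mem_setOf_eq, hf, Set.indicator_of_mem hx]
    exact Complex.exp_ne_zero _
  have hnull : volume {x : ℝ | ¬ f x = 0} = 0 := ae_iff.mp hzero
  have : volume (Set.Icc (0:ℝ) 1) = 0 :=
    measure_mono_null hsubset hnull
  rw [Real.volume_Icc] at this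
  norm_num at this
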